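/- Let X be a complex Banach space, let T ∈ L(X) be a quasi-Fredholm operator of degree d and let F ∈ L(X) be a finite-rank operator, so that T + F is quasi-Fredholm of some degree d'. If R(T) + N(T^d) has finite codimension in X, then R(T + F) + N((T + F)^{d'}) has finite codimension in X. -/

import Mathlib

noncomputable section

/-- The two-sided ideal `F₀(X)` of finite-rank operators in `L(X)`. -/
def finiteRankIdeal (X : Type*) [NormedAddCommGroup X] [NormedSpace ℂ X] :
    TwoSidedIdeal (X →L[ℂ] X) :=
  TwoSidedIdeal.mk'
    {F : X →L[ℂ] X | FiniteDimensional ℂ (LinearMap.range (↑F : X →ₗ[ℂ] X))}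
    (by
      show FiniteDimensional ℂ (LinearMap.range (↑(0 : X →L[ℂ] X) : X →ₗ[ℂ] X))
      rw [show LinearMap.range (↑(0 : X →L[ℂ] X) : X →ₗ[ℂ] X) = ⊥ by ext x; simp [eq_comm]]
      infer_instance)
    (by
      intro x y hx hy
      haveI : FiniteDimensional ℂ (LinearMap.range (↑x : X →ₗ[ℂ] X)) := hx
      haveI : FiniteDimensional ℂ (LinearMap.range (↑y : X →ₗ[ℂ] X)) := hy
      have hle : LinearMap.range (↑(x + y) : X →ₗ[ℂ] X) ≤ LinearMap.range (↑x : X →ₗ[ℂ] X) ⊔ LinearMap.range (↑y : X →ₗ[ℂ] X) := by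
        rintro z ⟨w, rfl⟩
        exact Submodule.add_mem_sup (LinearMap.mem_range_self (x : X →ₗ[ℂ] X) w) (LinearMap.mem_range_self (y : X →ₗ[ℂ] X) w)
      exact Submodule.finiteDimensional_of_le hle)
    (by
      intro x hx
      haveI : FiniteDimensional ℂ (LinearMap.range (↑x : X →ₗ[ℂ] X)) := hx
      have hle : LinearMap.range (↑(-x) : X →ₗ[ℂ] X) ≤ LinearMap.range (↑x : X →ₗ[ℂ] X) := by
        rintro z ⟨w, rfl⟩; exact ⟨-w, by simp⟩
      exact Submodule.finiteDimensional_of_le hle)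
    (by
      intro x y hy
      haveI : FiniteDimensional ℂ (LinearMap.range (↑y : X →ₗ[ℂ] X)) := hy
      haveI : FiniteDimensional ℂ (Submodule.map (x : X →ₗ[ℂ] X) (LinearMap.range (↑y : X →ₗ[ℂ] X))) :=
        Module.Finite.map _ _
      have hle : LinearMap.range (↑(x * y) : X →ₗ[ℂ] X) ≤ Submodule.map (x : X →ₗ[ℂ] X) (LinearMap.range (↑y : X →ₗ[ℂ] X)) := by
        rintro z ⟨w, rfl⟩; exact ⟨y w, LinearMap.mem_range_self (y : X →ₗ[ℂ] X) w, rfl⟩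
      exact Submodule.finiteDimensional_of_le hle)
    (by
      intro x y hx
      haveI : FiniteDimensional ℂ (LinearMap.range (↑x : X →ₗ[ℂ] X)) := hx
      have hle : LinearMap.range (↑(x * y) : X →ₗ[ℂ] X) ≤ LinearMap.range (↑x : X →ₗ[ℂ] X) := by
        rintro z ⟨w, rfl⟩; exact ⟨y w, rfl⟩
      exact Submodule.finiteDimensional_of_le hle)

/-- Restriction of a bounded operator to an invariant subspace, as a bounded
operator on that subspace. -/
def clmRestrict {X : Type*} [NormedAddCommGroup X] [NormedSpace ℂ X]
    (T : X →L[ℂ] X) (M : Submodule ℂ X) (h : ∀ x ∈ M, T x ∈ M) : M →L[ℂ] M where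
  toLinearMap := (T : X →ₗ[ℂ] X).restrict h
  cont := by
    show Continuous fun x : M => (⟨T x, h x x.2⟩ : M)
    exact Continuous.subtype_mk (T.continuous.comp continuous_subtype_val) _

/-- The set `Δ(T)` of stable iteration indices:
`Δ(T) = {n : ∀ m ≥ n, N(T) ∩ R(T^n) ⊆ N(T) ∩ R(T^m)}`. -/
def disSet {X : Type*} [NormedAddCommGroup X] [NormedSpace ℂ X] (T : X →L[ℂ] X) : Set ℕ :=
  {n | ∀ m, n ≤ m →
    (LinearMap.ker (↑T : X →ₗ[ℂ] X) ⊓ LinearMap.range (↑(T ^ n) : X →ₗ[ℂ] X) : Submodule ℂ X) ≤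
      LinearMap.ker (↑T : X →ₗ[ℂ] X) ⊓ LinearMap.range (↑(T ^ m) : X →ₗ[ℂ] X)}

/-- `T` is quasi-Fredholm of degree `d` : `dis(T) = d` (i.e. `d` is the least element of
`Δ(T)`), `N(T) ∩ R(T^d)` is a closed complemented subspace of `X`, and `R(T) + N(T^d)` is a
closed complemented subspace of `X`. -/
def IsQuasiFredholmOfDegree {X : Type*} [NormedAddCommGroup X] [NormedSpace ℂ X]
    (T : X →L[ℂ] X) (d : ℕ) : Prop :=
  IsLeast (disSet T) d ∧
    IsClosed ((LinearMap.ker (↑T : X →ₗ[ℂ] X) ⊓ LinearMap.range (↑(T ^ d) : X →ₗ[ℂ] X) : Submodule ℂ X) : Set X) ∧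
    (LinearMap.ker (↑T : X →ₗ[ℂ] X) ⊓ LinearMap.range (↑(T ^ d) : X →ₗ[ℂ] X)).ClosedComplemented ∧
    IsClosed ((LinearMap.range (↑T : X →ₗ[ℂ] X) ⊔ LinearMap.ker (↑(T ^ d) : X →ₗ[ℂ] X) : Submodule ℂ X) : Set X) ∧
    (LinearMap.range (↑T : X →ₗ[ℂ] X) ⊔ LinearMap.ker (↑(T ^ d) : X →ₗ[ℂ] X)).ClosedComplemented

/-- `T` is quasi-Fredholm if it is quasi-Fredholm of some degree `d`. -/
def IsQuasiFredholm {X : Type*} [NormedAddCommGroup X] [NormedSpace ℂ X]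
    (T : X →L[ℂ] X) : Prop :=
  ∃ d : ℕ, IsQuasiFredholmOfDegree T d

/-- Left semi-Fredholm: closed range, finite-dimensional kernel, and range complemented
(i.e. the range of a bounded projection). -/
def IsLeftSemiFredholm {Y : Type*} [NormedAddCommGroup Y] [NormedSpace ℂ Y]
    (S : Y →L[ℂ] Y) : Prop :=
  IsClosed ((LinearMap.range (↑S : Y →ₗ[ℂ] Y) : Submodule ℂ Y) : Set Y) ∧
    FiniteDimensional ℂ (LinearMap.ker (↑S : Y →ₗ[ℂ] Y)) ∧ (LinearMap.range (↑S : Y →ₗ[ℂ] Y)).ClosedComplemented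

/-- Right semi-Fredholm: closed range of finite codimension, and kernel complemented
(i.e. the range of a bounded projection). -/
def IsRightSemiFredholm {Y : Type*} [NormedAddCommGroup Y] [NormedSpace ℂ Y]
    (S : Y →L[ℂ] Y) : Prop :=
  IsClosed ((LinearMap.range (↑S : Y →ₗ[ℂ] Y) : Submodule ℂ Y) : Set Y) ∧
    FiniteDimensional ℂ (Y ⧸ LinearMap.range (↑S : Y →ₗ[ℂ] Y)) ∧ (LinearMap.ker (↑S : Y →ₗ[ℂ] Y)).ClosedComplemented

/-- Fredholm: closed range, finite-dimensional kernel, range of finite codimension. -/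
def IsFredholmOp {Y : Type*} [NormedAddCommGroup Y] [NormedSpace ℂ Y]
    (S : Y →L[ℂ] Y) : Prop :=
  IsClosed ((LinearMap.range (↑S : Y →ₗ[ℂ] Y) : Submodule ℂ Y) : Set Y) ∧
    FiniteDimensional ℂ (LinearMap.ker (↑S : Y →ₗ[ℂ] Y)) ∧ FiniteDimensional ℂ (Y ⧸ LinearMap.range (↑S : Y →ₗ[ℂ] Y))

/-- Regular operator: kernel and range are complemented (closed) subspaces. -/
def IsRegularOp {Y : Type*} [NormedAddCommGroup Y] [NormedSpace ℂ Y]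
    (S : Y →L[ℂ] Y) : Prop :=
  (LinearMap.ker (↑S : Y →ₗ[ℂ] Y)).ClosedComplemented ∧ (LinearMap.range (↑S : Y →ₗ[ℂ] Y)).ClosedComplemented

lemma range_pow_invariant {X : Type*} [NormedAddCommGroup X] [NormedSpace ℂ X]
    (T : X →L[ℂ] X) (n : ℕ) :
    ∀ x ∈ LinearMap.range (↑(T ^ n) : X →ₗ[ℂ] X), T x ∈ LinearMap.range (↑(T ^ n) : X →ₗ[ℂ] X) := by
  rintro x ⟨y, rfl⟩
  exact ⟨T y, by
    rw [ContinuousLinearMap.coe_coe, ← ContinuousLinearMap.mul_apply, ← ContinuousLinearMap.mul_apply, ← pow_succ,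
      ← pow_succ']⟩

/-- B-Fredholm: for some `n`, `R(T^n)` is closed and the restriction of `T` to `R(T^n)`,
viewed as an operator from `R(T^n)` to `R(T^n)`, is a Fredholm operator. -/
def IsBFredholm {X : Type*} [NormedAddCommGroup X] [NormedSpace ℂ X]
    (T : X →L[ℂ] X) : Prop :=
  ∃ n : ℕ, IsClosed ((LinearMap.range (↑(T ^ n) : X →ₗ[ℂ] X) : Submodule ℂ X) : Set X) ∧
    IsFredholmOp (clmRestrict T (LinearMap.range (↑(T ^ n) : X →ₗ[ℂ] X)) (range_pow_invariant T n))

/-- Left Drazin invertible element of a unital ring: there is an idempotent `p`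
commuting with `a` such that `a * p` is nilpotent and `a + p` has a left inverse
commuting with `p`. -/
def IsLeftDrazinInvertible {A : Type*} [Ring A] (a : A) : Prop :=
  ∃ p : A, IsIdempotentElem p ∧ a * p = p * a ∧ IsNilpotent (a * p) ∧
    ∃ b : A, b * (a + p) = 1 ∧ b * p = p * b

/-- Right Drazin invertible element of a unital ring: there is an idempotent `p`
commuting with `a` such that `a * p` is nilpotent and `a + p` has a right inverse
commuting with `p`. -/
def IsRightDrazinInvertible {A : Type*} [Ring A] (a : A) : Prop :=
  ∃ p : A, IsIdempotentElem p ∧ a * p = p * a ∧ IsNilpotent (a * p) ∧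
    ∃ b : A, (a + p) * b = 1 ∧ b * p = p * b

/-- Drazin invertible element of a unital ring: there is an idempotent `p`
commuting with `a` such that `a * p` is nilpotent and `a + p` is invertible. -/
def IsDrazinInvertible {A : Type*} [Ring A] (a : A) : Prop :=
  ∃ p : A, IsIdempotentElem p ∧ a * p = p * a ∧ IsNilpotent (a * p) ∧ IsUnit (a + p)

end

section auxiliary

variable {X : Type*} [NormedAddCommGroup X] [NormedSpace ℂ X]

lemma aux_range_pow_le (S : X →L[ℂ] X) {k m : ℕ} (h : k ≤ m) :
    LinearMap.range (↑(S ^ m) : X →ₗ[ℂ] X) ≤ LinearMap.range (↑(S ^ k) : X →ₗ[ℂ] X) := by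
  obtain ⟨c, rfl⟩ := Nat.exists_eq_add_of_le h
  rintro x ⟨y, rfl⟩
  exact ⟨(S ^ c) y, by rw [ContinuousLinearMap.coe_coe, ← ContinuousLinearMap.mul_apply, ← pow_add, ContinuousLinearMap.coe_coe]⟩

lemma aux_ker_pow_le (S : X →L[ℂ] X) {k m : ℕ} (h : k ≤ m) :
    LinearMap.ker (↑(S ^ k) : X →ₗ[ℂ] X) ≤ LinearMap.ker (↑(S ^ m) : X →ₗ[ℂ] X) := by
  obtain ⟨c, rfl⟩ := Nat.exists_eq_add_of_le h
  intro x hx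
  have hx' : (S ^ k) x = 0 := hx
  have h2 : (S ^ (k + c)) x = (S ^ c) ((S ^ k) x) := by
    rw [← ContinuousLinearMap.mul_apply, ← pow_add, add_comm]
  show (S ^ (k + c)) x = 0
  rw [h2, hx', map_zero]

lemma aux_comap (S : X →L[ℂ] X) (n : ℕ) :
    Submodule.comap ((S ^ n : X →L[ℂ] X) : X →ₗ[ℂ] X) (LinearMap.range (↑(S ^ (n + 1)) : X →ₗ[ℂ] X)) =
      LinearMap.range (↑S : X →ₗ[ℂ] X) ⊔ LinearMap.ker (↑(S ^ n) : X →ₗ[ℂ] X) := by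
  apply le_antisymm
  · intro x hx
    obtain ⟨y, hy⟩ := hx
    have hy' : (S ^ (n + 1)) y = (S ^ n) x := hy
    refine Submodule.mem_sup.2 ⟨S y, ⟨y, rfl⟩, x - S y, ?_, by abel⟩
    have h1 : (S ^ n) (S y) = (S ^ (n + 1)) y := by
      rw [pow_succ, ContinuousLinearMap.mul_apply]
    show (S ^ n) (x - S y) = 0
    rw [map_sub, h1, hy', sub_self]
  · intro x hx
    obtain ⟨a, ⟨y, rfl⟩, b, hb, rfl⟩ := Submodule.mem_sup.1 hx
    have hb' : (S ^ n) b = 0 := hb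
    refine ⟨y, ?_⟩
    show (S ^ (n + 1)) y = (S ^ n) (S y + b)
    rw [map_add, hb', add_zero, pow_succ, ContinuousLinearMap.mul_apply]

lemma aux_stab (S : X →L[ℂ] X) (e : ℕ)
    (hd : ∀ m, e ≤ m → (LinearMap.ker (↑S : X →ₗ[ℂ] X) ⊓ LinearMap.range (↑(S ^ e) : X →ₗ[ℂ] X) : Submodule ℂ X) ≤
      LinearMap.ker (↑S : X →ₗ[ℂ] X) ⊓ LinearMap.range (↑(S ^ m) : X →ₗ[ℂ] X)) :
    ∀ n, e ≤ n → LinearMap.range (↑S : X →ₗ[ℂ] X) ⊔ LinearMap.ker (↑(S ^ n) : X →ₗ[ℂ] X) =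
      LinearMap.range (↑S : X →ₗ[ℂ] X) ⊔ LinearMap.ker (↑(S ^ e) : X →ₗ[ℂ] X) := by
  intro n hn
  induction n, hn using Nat.le_induction with
  | base => rfl
  | succ n hn ih =>
    refine le_antisymm ?_ ?_
    · refine sup_le le_sup_left ?_
      intro x hx
      have hx1 : (S ^ (n + 1)) x = 0 := hx
      have h1 : (S ^ n) x ∈ (LinearMap.ker (↑S : X →ₗ[ℂ] X) ⊓ LinearMap.range (↑(S ^ e) : X →ₗ[ℂ] X) : Submodule ℂ X) := by
        constructor
        · show S ((S ^ n) x) = 0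
          rw [← ContinuousLinearMap.mul_apply, ← pow_succ']
          exact hx1
        · exact aux_range_pow_le S hn ⟨x, rfl⟩
      have h2 := hd (n + 1) (le_trans hn (Nat.le_succ n)) h1
      obtain ⟨y, hy⟩ := h2.2
      have hy' : (S ^ (n + 1)) y = (S ^ n) x := hy
      rw [← ih]
      refine Submodule.mem_sup.2 ⟨S y, ⟨y, rfl⟩, x - S y, ?_, by abel⟩
      have h3 : (S ^ n) (S y) = (S ^ (n + 1)) y := by
        rw [pow_succ, ContinuousLinearMap.mul_apply]
      show (S ^ n) (x - S y) = 0
      rw [map_sub, h3, hy', sub_self]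
    · exact sup_le_sup_left (aux_ker_pow_le S (hn.trans (Nat.le_succ n))) _

lemma aux_fin_range_add {A B : X →L[ℂ] X}
    (hA : FiniteDimensional ℂ (LinearMap.range (↑A : X →ₗ[ℂ] X)))
    (hB : FiniteDimensional ℂ (LinearMap.range (↑B : X →ₗ[ℂ] X))) :
    FiniteDimensional ℂ (LinearMap.range (↑(A + B) : X →ₗ[ℂ] X)) := by
  have hle : LinearMap.range (↑(A + B) : X →ₗ[ℂ] X) ≤ LinearMap.range (↑A : X →ₗ[ℂ] X) ⊔ LinearMap.range (↑B : X →ₗ[ℂ] X) := by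
    rintro z ⟨w, rfl⟩
    exact Submodule.add_mem_sup (LinearMap.mem_range_self (A : X →ₗ[ℂ] X) w) (LinearMap.mem_range_self (B : X →ₗ[ℂ] X) w)
  exact Submodule.finiteDimensional_of_le hle

lemma aux_fin_range_mul_left (A : X →L[ℂ] X) {B : X →L[ℂ] X}
    (hB : FiniteDimensional ℂ (LinearMap.range (↑B : X →ₗ[ℂ] X))) :
    FiniteDimensional ℂ (LinearMap.range (↑(A * B) : X →ₗ[ℂ] X)) := by
  haveI : FiniteDimensional ℂ (Submodule.map (A : X →ₗ[ℂ] X) (LinearMap.range (↑B : X →ₗ[ℂ] X))) :=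
    Module.Finite.map _ _
  have hle : LinearMap.range (↑(A * B) : X →ₗ[ℂ] X) ≤ Submodule.map (A : X →ₗ[ℂ] X) (LinearMap.range (↑B : X →ₗ[ℂ] X)) := by
    rintro z ⟨w, rfl⟩; exact ⟨B w, LinearMap.mem_range_self (B : X →ₗ[ℂ] X) w, rfl⟩
  exact Submodule.finiteDimensional_of_le hle

lemma aux_fin_range_mul_right {A : X →L[ℂ] X} (B : X →L[ℂ] X)
    (hA : FiniteDimensional ℂ (LinearMap.range (↑A : X →ₗ[ℂ] X))) :
    FiniteDimensional ℂ (LinearMap.range (↑(A * B) : X →ₗ[ℂ] X)) := by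
  have hle : LinearMap.range (↑(A * B) : X →ₗ[ℂ] X) ≤ LinearMap.range (↑A : X →ₗ[ℂ] X) := by
    rintro z ⟨w, rfl⟩; exact ⟨B w, rfl⟩
  exact Submodule.finiteDimensional_of_le hle

lemma aux_fin_pow_sub (T F : X →L[ℂ] X)
    (hF : FiniteDimensional ℂ (LinearMap.range (↑F : X →ₗ[ℂ] X))) (n : ℕ) :
    FiniteDimensional ℂ (LinearMap.range (↑((T + F) ^ n - T ^ n) : X →ₗ[ℂ] X)) := by
  induction n with
  | zero =>
    rw [pow_zero, pow_zero, sub_self]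
    rw [show LinearMap.range (↑(0 : X →L[ℂ] X) : X →ₗ[ℂ] X) = ⊥ by ext x; simp [eq_comm]]
    infer_instance
  | succ n ih =>
    have key : (T + F) ^ (n + 1) - T ^ (n + 1) =
        ((T + F) ^ n - T ^ n) * (T + F) + T ^ n * F := by
      rw [pow_succ, pow_succ]; noncomm_ring
    rw [key]
    exact aux_fin_range_add (aux_fin_range_mul_right _ ih) (aux_fin_range_mul_left _ hF)

lemma exists_findim_sup {V : Type*} [AddCommGroup V] [Module ℂ V] (p q : Submodule ℂ V)
    (h : FiniteDimensional ℂ (Submodule.map q.mkQ p)) :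
    ∃ W : Submodule ℂ V, FiniteDimensional ℂ W ∧ p ≤ q ⊔ W := by
  classical
  obtain ⟨s, hs⟩ := (Submodule.fg_iff_finiteDimensional _).2 h
  have hlift : ∀ y ∈ s, ∃ x, x ∈ p ∧ q.mkQ x = y := by
    intro y hy
    have hmem : y ∈ Submodule.map q.mkQ p := by
      rw [← hs]; exact Submodule.subset_span hy
    obtain ⟨x, hx, hxy⟩ := hmem
    exact ⟨x, hx, hxy⟩
  choose! l hl1 hl2 using hlift
  refine ⟨Submodule.span ℂ (l '' s), ?_, ?_⟩
  · exact FiniteDimensional.span_of_finite ℂ (s.finite_toSet.image l)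
  · intro x hx
    have hmk : q.mkQ x ∈ Submodule.map q.mkQ (Submodule.span ℂ (l '' s)) := by
      rw [Submodule.map_span]
      have hsub : (s : Set (V ⧸ q)) ⊆ q.mkQ '' (l '' s) := by
        intro y hy
        exact ⟨l y, ⟨y, hy, rfl⟩, hl2 y hy⟩
      have hx' : q.mkQ x ∈ Submodule.span ℂ (s : Set (V ⧸ q)) := by
        rw [hs]; exact ⟨x, hx, rfl⟩
      exact Submodule.span_mono hsub hx'
    obtain ⟨w, hw, hwx⟩ := hmk
    have hq : x - w ∈ q := by
      have : q.mkQ (x - w) = 0 := by rw [map_sub, hwx, sub_self]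
      rwa [← Submodule.Quotient.mk_eq_zero, ← Submodule.mkQ_apply]
    exact Submodule.mem_sup.2 ⟨x - w, hq, w, hw, by abel⟩

end auxiliary


/-- If `T` is quasi-Fredholm of degree `d`, `F` has finite rank and `T + F` is
quasi-Fredholm of degree `d'`, then finite codimension of `R(T) + N(T^d)` implies finite
codimension of `R(T+F) + N((T+F)^{d'})`. -/
theorem finiteCodim_range_sup_kernel_perturbation
    (X : Type*) [NormedAddCommGroup X] [NormedSpace ℂ X] [CompleteSpace X]
    (T F : X →L[ℂ] X) (d d' : ℕ)
    (hT : IsQuasiFredholmOfDegree T d)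
    (hF : FiniteDimensional ℂ (LinearMap.range (↑F : X →ₗ[ℂ] X)))
    (hTF : IsQuasiFredholmOfDegree (T + F) d')
    (hcodim : FiniteDimensional ℂ
      (X ⧸ (LinearMap.range (↑T : X →ₗ[ℂ] X) ⊔ LinearMap.ker (↑(T ^ d) : X →ₗ[ℂ] X)))) :
    FiniteDimensional ℂ
      (X ⧸ (LinearMap.range (↑(T + F) : X →ₗ[ℂ] X) ⊔ LinearMap.ker (↑((T + F) ^ d') : X →ₗ[ℂ] X))) := by
  classical
  set S := T + F with hSdef
  set n := max d d' with hndef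
  have hdS : d' ∈ disSet S := hTF.1.1
  -- Step 1: X ⧸ (R(T) ⊔ N(T^n)) is finite dimensional
  have hle1 : (LinearMap.range (↑T : X →ₗ[ℂ] X) ⊔ LinearMap.ker (↑(T ^ d) : X →ₗ[ℂ] X)) ≤
      (LinearMap.range (↑T : X →ₗ[ℂ] X) ⊔ LinearMap.ker (↑(T ^ n) : X →ₗ[ℂ] X)) :=
    sup_le_sup_left (aux_ker_pow_le T (le_max_left d d')) _
  have h1 : FiniteDimensional ℂ (X ⧸ (LinearMap.range (↑T : X →ₗ[ℂ] X) ⊔ LinearMap.ker (↑(T ^ n) : X →ₗ[ℂ] X))) := by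
    refine Module.Finite.of_surjective
      (Submodule.mapQ (LinearMap.range (↑T : X →ₗ[ℂ] X) ⊔ LinearMap.ker (↑(T ^ d) : X →ₗ[ℂ] X))
        (LinearMap.range (↑T : X →ₗ[ℂ] X) ⊔ LinearMap.ker (↑(T ^ n) : X →ₗ[ℂ] X)) LinearMap.id
        (by simpa using hle1)) ?_
    intro z
    obtain ⟨x, rfl⟩ := Submodule.mkQ_surjective _ z
    exact ⟨Submodule.mkQ _ x, by simp [Submodule.mapQ_apply]⟩
  -- Step 2: obtain W finite dimensional with R(T^n) ≤ R(T^{n+1}) ⊔ W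
  have hkerh : LinearMap.ker ((LinearMap.range (↑(T ^ (n + 1)) : X →ₗ[ℂ] X)).mkQ ∘ₗ
      ((T ^ n : X →L[ℂ] X) : X →ₗ[ℂ] X)) = LinearMap.range (↑T : X →ₗ[ℂ] X) ⊔ LinearMap.ker (↑(T ^ n) : X →ₗ[ℂ] X) := by
    rw [LinearMap.ker_comp, Submodule.ker_mkQ, aux_comap]
  have h2 : FiniteDimensional ℂ (LinearMap.range ((LinearMap.range (↑(T ^ (n + 1)) : X →ₗ[ℂ] X)).mkQ ∘ₗ
      ((T ^ n : X →L[ℂ] X) : X →ₗ[ℂ] X))) := by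
    have e := ((LinearMap.range (↑(T ^ (n + 1)) : X →ₗ[ℂ] X)).mkQ ∘ₗ
      ((T ^ n : X →L[ℂ] X) : X →ₗ[ℂ] X)).quotKerEquivRange
    rw [hkerh] at e
    exact Module.Finite.equiv e
  have h2' : FiniteDimensional ℂ (Submodule.map (LinearMap.range (↑(T ^ (n + 1)) : X →ₗ[ℂ] X)).mkQ
      (LinearMap.range (↑(T ^ n) : X →ₗ[ℂ] X))) := by
    have heq : LinearMap.range ((LinearMap.range (↑(T ^ (n + 1)) : X →ₗ[ℂ] X)).mkQ ∘ₗ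
        ((T ^ n : X →L[ℂ] X) : X →ₗ[ℂ] X)) = Submodule.map (LinearMap.range (↑(T ^ (n + 1)) : X →ₗ[ℂ] X)).mkQ
        (LinearMap.range (↑(T ^ n) : X →ₗ[ℂ] X)) := LinearMap.range_comp _ _
    rwa [heq] at h2
  obtain ⟨W, hWfin, hW⟩ := exists_findim_sup (LinearMap.range (↑(T ^ n) : X →ₗ[ℂ] X))
    (LinearMap.range (↑(T ^ (n + 1)) : X →ₗ[ℂ] X)) h2'
  -- Step 3: finite-rank corrections
  have hK1 : FiniteDimensional ℂ (LinearMap.range (↑(S ^ n - T ^ n) : X →ₗ[ℂ] X)) := aux_fin_pow_sub T F hF n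
  have hK2 : FiniteDimensional ℂ (LinearMap.range (↑(S ^ (n + 1) - T ^ (n + 1)) : X →ₗ[ℂ] X)) :=
    aux_fin_pow_sub T F hF (n + 1)
  set V := LinearMap.range (↑(S ^ (n + 1) - T ^ (n + 1)) : X →ₗ[ℂ] X) ⊔
    (W ⊔ LinearMap.range (↑(S ^ n - T ^ n) : X →ₗ[ℂ] X)) with hVdef
  haveI hVfin : FiniteDimensional ℂ V := by
    haveI := hK1; haveI := hK2; haveI := hWfin
    exact Submodule.finiteDimensional_sup _ _
  have hA : LinearMap.range (↑(T ^ (n + 1)) : X →ₗ[ℂ] X) ≤ LinearMap.range (↑(S ^ (n + 1)) : X →ₗ[ℂ] X) ⊔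
      LinearMap.range (↑(S ^ (n + 1) - T ^ (n + 1)) : X →ₗ[ℂ] X) := by
    rintro x ⟨y, rfl⟩
    have hview : (T ^ (n + 1)) y = (S ^ (n + 1)) y + (-((S ^ (n + 1) - T ^ (n + 1)) y)) := by
      simp
    rw [ContinuousLinearMap.coe_coe, hview]
    exact Submodule.add_mem_sup ⟨y, rfl⟩ (neg_mem ⟨y, rfl⟩)
  have hB : LinearMap.range (↑(S ^ n) : X →ₗ[ℂ] X) ≤ LinearMap.range (↑(T ^ n) : X →ₗ[ℂ] X) ⊔
      LinearMap.range (↑(S ^ n - T ^ n) : X →ₗ[ℂ] X) := by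
    rintro x ⟨y, rfl⟩
    have hview : (S ^ n) y = (T ^ n) y + (S ^ n - T ^ n) y := by simp
    rw [ContinuousLinearMap.coe_coe, hview]
    exact Submodule.add_mem_sup ⟨y, rfl⟩ ⟨y, rfl⟩
  have hchain : LinearMap.range (↑(S ^ n) : X →ₗ[ℂ] X) ≤ LinearMap.range (↑(S ^ (n + 1)) : X →ₗ[ℂ] X) ⊔ V := by
    calc LinearMap.range (↑(S ^ n) : X →ₗ[ℂ] X)
        ≤ LinearMap.range (↑(T ^ n) : X →ₗ[ℂ] X) ⊔ LinearMap.range (↑(S ^ n - T ^ n) : X →ₗ[ℂ] X) := hB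
      _ ≤ (LinearMap.range (↑(T ^ (n + 1)) : X →ₗ[ℂ] X) ⊔ W) ⊔ LinearMap.range (↑(S ^ n - T ^ n) : X →ₗ[ℂ] X) :=
          sup_le_sup_right hW _
      _ ≤ ((LinearMap.range (↑(S ^ (n + 1)) : X →ₗ[ℂ] X) ⊔ LinearMap.range (↑(S ^ (n + 1) - T ^ (n + 1)) : X →ₗ[ℂ] X)) ⊔ W) ⊔
            LinearMap.range (↑(S ^ n - T ^ n) : X →ₗ[ℂ] X) :=
          sup_le_sup_right (sup_le_sup_right hA _) _
      _ = LinearMap.range (↑(S ^ (n + 1)) : X →ₗ[ℂ] X) ⊔ V := by rw [hVdef, sup_assoc, sup_assoc]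
  -- Step 4: conclude
  have hkerg : LinearMap.ker ((LinearMap.range (↑(S ^ (n + 1)) : X →ₗ[ℂ] X)).mkQ ∘ₗ
      ((S ^ n : X →L[ℂ] X) : X →ₗ[ℂ] X)) = LinearMap.range (↑S : X →ₗ[ℂ] X) ⊔ LinearMap.ker (↑(S ^ d') : X →ₗ[ℂ] X) := by
    rw [LinearMap.ker_comp, Submodule.ker_mkQ, aux_comap,
      aux_stab S d' hdS n (le_max_right d d')]
  have hrg : FiniteDimensional ℂ (LinearMap.range ((LinearMap.range (↑(S ^ (n + 1)) : X →ₗ[ℂ] X)).mkQ ∘ₗ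
      ((S ^ n : X →L[ℂ] X) : X →ₗ[ℂ] X))) := by
    haveI : FiniteDimensional ℂ
        (Submodule.map ((LinearMap.range (↑(S ^ (n + 1)) : X →ₗ[ℂ] X)).mkQ : X →ₗ[ℂ] X ⧸ _) V) :=
      Module.Finite.map _ _
    refine Submodule.finiteDimensional_of_le
      (S₂ := Submodule.map ((LinearMap.range (↑(S ^ (n + 1)) : X →ₗ[ℂ] X)).mkQ : X →ₗ[ℂ] X ⧸ _) V) ?_
    rintro z ⟨x, rfl⟩
    obtain ⟨a, ha, v, hv, hav⟩ := Submodule.mem_sup.1 (hchain ⟨x, rfl⟩)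
    refine ⟨v, hv, ?_⟩
    have hdiff : v - (S ^ n) x = -a := by rw [← ContinuousLinearMap.coe_coe, ← hav]; abel
    show (LinearMap.range (↑(S ^ (n + 1)) : X →ₗ[ℂ] X)).mkQ v =
      ((LinearMap.range (↑(S ^ (n + 1)) : X →ₗ[ℂ] X)).mkQ ∘ₗ ((S ^ n : X →L[ℂ] X) : X →ₗ[ℂ] X)) x
    have hz : (LinearMap.range (↑(S ^ (n + 1)) : X →ₗ[ℂ] X)).mkQ (v - (S ^ n) x) = 0 := by
      rw [hdiff]
      simpa [Submodule.mkQ_apply, Submodule.Quotient.mk_eq_zero] using neg_mem ha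
    have h0 : (LinearMap.range (↑(S ^ (n + 1)) : X →ₗ[ℂ] X)).mkQ v =
        (LinearMap.range (↑(S ^ (n + 1)) : X →ₗ[ℂ] X)).mkQ ((S ^ n) x) := by
      have h' : (LinearMap.range (↑(S ^ (n + 1)) : X →ₗ[ℂ] X)).mkQ v -
          (LinearMap.range (↑(S ^ (n + 1)) : X →ₗ[ℂ] X)).mkQ ((S ^ n) x) = 0 := by
        rw [← map_sub]; exact hz
      exact sub_eq_zero.mp h'
    exact h0
  have e := ((LinearMap.range (↑(S ^ (n + 1)) : X →ₗ[ℂ] X)).mkQ ∘ₗ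
    ((S ^ n : X →L[ℂ] X) : X →ₗ[ℂ] X)).quotKerEquivRange
  rw [hkerg] at e
  exact Module.Finite.equiv e.symm
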